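/- arXiv:1203.2832 — 2 statements merged into one kernel-verified Lean document; each statement's English description precedes it below -/
import Mathlib

section
/- Let 0 < δ < 1 and let (a_t)_{t≥1} be a sequence of real numbers bounded in absolute value by M ≥ 1. For h ≥ 1 define a_*^h = (1-δ) ∑_{t≥h} δ^{t-h} a_t. Suppose a ≥ 0 is an accumulation point of the sequence (a_*^h)_h. Then for every γ > 0, if δ is sufficiently close to 1 (specifically (1-δ)M < γ/2), there exists a time h such that a_h > a - γ and a_*^{h+1} < a + γ. -/
/-- Accumulation-point lemma for the stable core: along a bounded payoff
stream whose tail-discounted values accumulate at `a₀ ≥ 0`, if `(1-δ)M < γ/2`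
there is a time `h` where the instantaneous payoff exceeds `a₀ - γ` while the
continuation value at `h+1` is below `a₀ + γ`. -/
theorem stable_core_accumulation_lemma
    (δ M a₀ γ : ℝ) (a : ℕ → ℝ) (A : ℕ → ℝ)
    (hδ0 : 0 < δ) (hδ1 : δ < 1) (hM : 1 ≤ M)
    (hbd : ∀ t, 1 ≤ t → |a t| ≤ M)
    (hA : ∀ h, 1 ≤ h → A h = (1 - δ) * ∑' t : ℕ, δ ^ t * a (h + t))
    (ha0 : 0 ≤ a₀)
    (hacc : MapClusterPt a₀ Filter.atTop A)
    (hγ : 0 < γ)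
    (hclose : (1 - δ) * M < γ / 2) :
    ∃ h, 1 ≤ h ∧ a h > a₀ - γ ∧ A (h + 1) < a₀ + γ := by
  by_contra hcon
  push_neg at hcon
  -- summability
  have hsum : ∀ h : ℕ, 1 ≤ h → Summable (fun t : ℕ => δ ^ t * a (h + t)) := by
    intro h hh
    apply Summable.of_norm_bounded (g := fun t : ℕ => M * δ ^ t)
      ((summable_geometric_of_lt_one hδ0.le hδ1).mul_left M)
    intro t
    have h1 : |δ ^ t * a (h + t)| = δ ^ t * |a (h + t)| := by
      rw [abs_mul, abs_of_nonneg (pow_nonneg hδ0.le t)]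
    rw [Real.norm_eq_abs, h1, mul_comm M (δ ^ t)]
    exact mul_le_mul_of_nonneg_left (hbd _ (le_trans hh (Nat.le_add_right h t)))
      (pow_nonneg hδ0.le t)
  -- recursion : A h = (1-δ) a h + δ A (h+1)
  have hrec : ∀ h : ℕ, 1 ≤ h → A h = (1 - δ) * a h + δ * A (h + 1) := by
    intro h hh
    have hs := hsum h hh
    have hsplit := Summable.tsum_eq_zero_add hs
    have heq : ∀ t : ℕ, δ ^ (t + 1) * a (h + (t + 1)) = δ * (δ ^ t * a (h + 1 + t)) := by
      intro t
      have : h + (t + 1) = h + 1 + t := by omega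
      rw [this]; ring
    rw [hA h hh, hA (h + 1) (by omega), hsplit]
    simp only [heq, pow_zero, one_mul, Nat.add_zero]
    rw [tsum_mul_left]
    ring
  -- constants
  set ε : ℝ := (1 - δ) * γ / 2 with hε_def
  have hε : 0 < ε := by
    have : 0 < 1 - δ := by linarith
    positivity
  set c : ℝ := min γ ((1 - δ) * γ / (2 * δ)) with hc_def
  have hc : 0 < c := by
    apply lt_min hγ
    have : 0 < 1 - δ := by linarith
    positivity
  have hcγ : c ≤ γ := min_le_left _ _
  have hcδ : δ * c ≤ (1 - δ) * γ / 2 := by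
    have h1 : c ≤ (1 - δ) * γ / (2 * δ) := min_le_right _ _
    have h2 : δ * c ≤ δ * ((1 - δ) * γ / (2 * δ)) :=
      mul_le_mul_of_nonneg_left h1 hδ0.le
    have h3 : δ * ((1 - δ) * γ / (2 * δ)) = (1 - δ) * γ / 2 := by
      field_simp
    linarith
  -- key step
  have hstep : ∀ h : ℕ, 1 ≤ h → a₀ - ε ≤ A h → a₀ + c ≤ A (h + 1) := by
    intro h hh hAh
    by_cases hah : a₀ - γ < a h
    · have := hcon h hh hah
      linarith
    · push_neg at hah
      have hr := hrec h hh
      -- δ * A (h+1) = A h - (1-δ) * a h ≥ a₀ - ε - (1-δ)(a₀ - γ) = δ a₀ + (1-δ)γ/2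
      have h1 : δ * A (h + 1) ≥ δ * a₀ + (1 - δ) * γ / 2 := by
        have h2 : (1 - δ) * a h ≤ (1 - δ) * (a₀ - γ) :=
          mul_le_mul_of_nonneg_left hah (by linarith)
        have : δ * A (h + 1) = A h - (1 - δ) * a h := by linarith
        rw [this]
        have : a₀ - ε - (1 - δ) * (a₀ - γ) = δ * a₀ + (1 - δ) * γ / 2 := by
          rw [hε_def]; ring
        linarith
      have h3 : δ * (a₀ + c) ≤ δ * A (h + 1) := by
        have : δ * (a₀ + c) = δ * a₀ + δ * c := by ring
        linarith
      exact le_of_mul_le_mul_left h3 hδ0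
  -- get h₀ with A h₀ close to a₀
  have hfreq : ∀ r : ℝ, 0 < r → ∀ n : ℕ, ∃ h, n ≤ h ∧ |A h - a₀| < r := by
    intro r hr n
    have h1 : ∃ᶠ h in Filter.atTop, A h ∈ Metric.ball a₀ r :=
      (mapClusterPt_iff_frequently.mp hacc) _ (Metric.ball_mem_nhds a₀ hr)
    have h2 := (h1.and_eventually (Filter.eventually_ge_atTop n)).exists
    obtain ⟨h, hball, hn⟩ := h2
    exact ⟨h, hn, by simpa [Real.dist_eq] using hball⟩
  obtain ⟨h₀, hh₀, hAh₀⟩ := hfreq ε hε 1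
  -- induction: A (h₀ + 1 + n) ≥ a₀ + c
  have hind : ∀ n : ℕ, a₀ + c ≤ A (h₀ + 1 + n) := by
    intro n
    induction n with
    | zero => exact hstep h₀ hh₀ (by rw [abs_sub_lt_iff] at hAh₀; linarith [hAh₀.2])
    | succ n ih =>
        have : h₀ + 1 + (n + 1) = (h₀ + 1 + n) + 1 := by omega
        rw [this]
        exact hstep _ (by omega) (by linarith)
  obtain ⟨h₁, hh₁, hAh₁⟩ := hfreq c hc (h₀ + 1)
  have h4 : a₀ + c ≤ A h₁ := by
    have : h₀ + 1 + (h₁ - (h₀ + 1)) = h₁ := by omega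
    have h5 := hind (h₁ - (h₀ + 1))
    rwa [this] at h5
  rw [abs_sub_lt_iff] at hAh₁
  linarith [hAh₁.1]
end

section
/- For every α₁, …, α_k ≥ 0 with ∑_j α_j = 1 and every ε > 0, there exists δ₀ < 1 such that for all δ ∈ (δ₀, 1) there is a partition of the positive integers into disjoint sets T¹, …, T^k with |α_j - (1-δ) ∑_{t ∈ T^j} δ^{t-1}| < ε for every j. -/
private lemma geom_tail_aux {δ : ℝ} (h0 : 0 ≤ δ) (h1 : δ < 1) (a : ℕ) :
    (1 - δ) * ∑' e : (Set.Ici a : Set ℕ), δ ^ (e : ℕ) = δ ^ a := by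
  have key : ∑' e : (Set.Ici a : Set ℕ), δ ^ (e : ℕ) = δ ^ a * (1 - δ)⁻¹ := by
    have h := Equiv.tsum_eq
      (⟨fun n : ℕ => (⟨a + n, Set.mem_Ici.mpr (Nat.le_add_right a n)⟩ :
          (Set.Ici a : Set ℕ)),
        fun x => (x : ℕ) - a,
        fun n => by simp,
        fun x => Subtype.ext (Nat.add_sub_cancel' x.2)⟩ : ℕ ≃ (Set.Ici a : Set ℕ))
      (fun x : (Set.Ici a : Set ℕ) => δ ^ (x : ℕ))
    rw [← h]
    simp only [Equiv.coe_fn_mk, pow_add]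
    rw [tsum_mul_left, tsum_geometric_of_lt_one h0 h1]
  rw [key]
  have h3 : (1 : ℝ) - δ ≠ 0 := by linarith
  field_simp

/-- The key bound: `G x := (1-δ) * ∑_{e : δ^e ≤ x} δ^e` satisfies
`x - (1-δ) ≤ G x ≤ x` for `x ∈ [0,1]`. -/
private lemma G_bound {δ : ℝ} (h0 : 0 < δ) (h1 : δ < 1) {x : ℝ}
    (hx0 : 0 ≤ x) (hx1 : x ≤ 1) :
    x - (1 - δ) ≤ (1 - δ) * ∑' e : {e : ℕ | δ ^ e ≤ x}, δ ^ (e : ℕ) ∧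
      (1 - δ) * ∑' e : {e : ℕ | δ ^ e ≤ x}, δ ^ (e : ℕ) ≤ x := by
  rcases eq_or_lt_of_le hx0 with hx | hx
  · have hempty : {e : ℕ | δ ^ e ≤ x} = (∅ : Set ℕ) := by
      ext e
      simp only [Set.mem_setOf_eq, Set.mem_empty_iff_false, iff_false, not_le, ← hx]
      exact pow_pos h0 e
    rw [hempty]
    simp only [tsum_empty, mul_zero]
    constructor <;> [linarith; exact hx0]
  · have hex : ∃ n : ℕ, δ ^ n ≤ x := by
      obtain ⟨n, hn⟩ := exists_pow_lt_of_lt_one hx h1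
      exact ⟨n, hn.le⟩
    set a := Nat.find hex with ha
    have hset : {e : ℕ | δ ^ e ≤ x} = Set.Ici a := by
      ext e
      simp only [Set.mem_setOf_eq, Set.mem_Ici]
      constructor
      · intro he; exact Nat.find_le he
      · intro he
        exact le_trans (pow_le_pow_of_le_one h0.le h1.le he) (Nat.find_spec hex)
    rw [hset, geom_tail_aux h0.le h1]
    have hub : δ ^ a ≤ x := Nat.find_spec hex
    have hlb : δ * x ≤ δ ^ a := by
      rcases Nat.eq_zero_or_pos a with h | h
      · rw [h, pow_zero]
        nlinarith
      · have hmin : ¬ δ ^ (a - 1) ≤ x := Nat.find_min hex (by omega)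
        push_neg at hmin
        have : δ * δ ^ (a - 1) = δ ^ a := by
          rw [← pow_succ']
          congr 1
          omega
        nlinarith
    constructor
    · nlinarith
    · exact hub

/-- Fudenberg–Maskin time-partition device: for high discount factors the
positive integers can be partitioned into sets `T¹,…,T^k` whose normalized
discounted weights approximate any given convex weights `α` within `ε`. -/
theorem time_partition_of_convex_weights
    (k : ℕ) (α : Fin k → ℝ) (hα0 : ∀ j, 0 ≤ α j) (hα1 : ∑ j, α j = 1)
    (ε : ℝ) (hε : 0 < ε) :
    ∃ δ₀ : ℝ, δ₀ < 1 ∧ ∀ δ : ℝ, δ₀ < δ → δ < 1 →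
      ∃ T : Fin k → Set ℕ,
        (Pairwise fun j j' => Disjoint (T j) (T j')) ∧
        (⋃ j, T j) = {t : ℕ | 1 ≤ t} ∧
        ∀ j, |α j - (1 - δ) * ∑' t : T j, δ ^ ((t : ℕ) - 1)| < ε := by
  classical
  -- extend α to ℕ by zero and consider partial sums
  set α' : ℕ → ℝ := fun i => if h : i < k then α ⟨i, h⟩ else 0 with hα'
  have hα'0 : ∀ i, 0 ≤ α' i := by
    intro i
    by_cases h : i < k <;> simp [hα', h, hα0]
  set s : ℕ → ℝ := fun m => ∑ i ∈ Finset.range m, α' i with hs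
  have hs0 : s 0 = 0 := by simp [hs]
  have hsk : s k = 1 := by
    show ∑ i ∈ Finset.range k, α' i = 1
    rw [← hα1, ← Fin.sum_univ_eq_sum_range]
    apply Finset.sum_congr rfl
    intro i _
    simp [hα', i.isLt]
  have hsmono : Monotone s := by
    intro m n hmn
    exact Finset.sum_le_sum_of_subset_of_nonneg
      (Finset.range_subset_range.mpr hmn) (fun i _ _ => hα'0 i)
  have hsucc : ∀ m, s (m + 1) = s m + α' m := by
    intro m; simp [hs, Finset.sum_range_succ]
  have hs01 : ∀ m, m ≤ k → 0 ≤ s m ∧ s m ≤ 1 := by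
    intro m hm
    constructor
    · rw [← hs0]; exact hsmono (Nat.zero_le m)
    · rw [← hsk]; exact hsmono hm
  refine ⟨max (1 - ε) (1/2), ?_, ?_⟩
  · apply max_lt <;> linarith
  intro δ hδ0 hδ1
  have hδpos : (0:ℝ) < δ := lt_of_le_of_lt (by norm_num : (0:ℝ) ≤ 1/2)
    (lt_of_le_of_lt (le_max_right _ _) hδ0)
  have hδε : 1 - δ < ε := by
    have := lt_of_le_of_lt (le_max_left (1 - ε) (1/2)) hδ0
    linarith
  -- the exponent-space sets
  set S : ℝ → Set ℕ := fun x => {e : ℕ | δ ^ e ≤ x} with hS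
  set E : Fin k → Set ℕ := fun j =>
    S (1 - s j) \ S (1 - s (j + 1)) with hE
  set T : Fin k → Set ℕ := fun j => (· + 1) '' E j with hT
  have hsummable : Summable (fun e : ℕ => δ ^ e) :=
    summable_geometric_of_lt_one hδpos.le hδ1
  have hsub : ∀ {x y : ℝ}, x ≤ y → S x ⊆ S y := by
    intro x y hxy e he
    exact le_trans he hxy
  -- mass identity on diffs
  have hmass : ∀ j : Fin k, (∑' e : E j, δ ^ (e : ℕ)) =
      (∑' e : S (1 - s j), δ ^ (e : ℕ)) - (∑' e : S (1 - s (j + 1)), δ ^ (e : ℕ)) := by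
    intro j
    have hss : S (1 - s (j + 1)) ⊆ S (1 - s j) := by
      apply hsub
      have := hsmono (Nat.le_succ (j : ℕ))
      linarith
    have hdisj : Disjoint (S (1 - s (j + 1))) (E j) := Set.disjoint_sdiff_right
    have hunion : S (1 - s (j + 1)) ∪ E j = S (1 - s j) := by
      rw [hE]; exact Set.union_diff_cancel hss
    have := Summable.tsum_union_disjoint (f := fun e : ℕ => δ ^ e) hdisj
      (hsummable.subtype _) (hsummable.subtype _)
    rw [hunion] at this
    linarith [this]
  refine ⟨T, ?_, ?_, ?_⟩
  · -- pairwise disjoint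
    intro j j' hjj'
    have key : ∀ j₁ j₂ : Fin k, (j₁ : ℕ) < (j₂ : ℕ) → Disjoint (T j₁) (T j₂) := by
      intro j₁ j₂ h12
      rw [Set.disjoint_left]
      rintro t ⟨e, he, rfl⟩ ⟨e', he', het⟩
      have hee : e' = e := by simpa using het
      rw [hee] at he'
      have h1 : ¬ δ ^ e ≤ 1 - s ((j₁ : ℕ) + 1) := he.2
      have h2 : δ ^ e ≤ 1 - s (j₂ : ℕ) := he'.1
      have : s (j₂ : ℕ) ≥ s ((j₁ : ℕ) + 1) := hsmono (by omega)
      exact h1 (by linarith)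
    rcases lt_or_gt_of_ne (fun h => hjj' (Fin.ext h)) with h | h
    · exact key j j' h
    · exact (key j' j h).symm
  · -- union
    ext t
    simp only [Set.mem_iUnion, Set.mem_setOf_eq]
    constructor
    · rintro ⟨j, e, _, rfl⟩
      show 1 ≤ e + 1
      omega
    · intro ht
      set e := t - 1 with he
      have het : t = e + 1 := by omega
      have hex : ∃ m, 1 - s m < δ ^ e := by
        refine ⟨k, ?_⟩
        rw [hsk]
        simpa using pow_pos hδpos e
      set m := Nat.find hex with hm
      have hmspec : 1 - s m < δ ^ e := Nat.find_spec hex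
      have hm0 : 1 ≤ m := by
        rcases Nat.eq_zero_or_pos m with h | h
        · exfalso
          have h2 : 1 - s 0 < δ ^ e := h ▸ hmspec
          rw [hs0] at h2
          have h3 : δ ^ e ≤ 1 := pow_le_one₀ hδpos.le hδ1.le
          linarith
        · exact h
      have hmk : m ≤ k := Nat.find_le (by
        rw [hsk]; simpa using pow_pos hδpos e)
      have hmin : ¬ (1 - s (m - 1) < δ ^ e) := Nat.find_min hex (by omega)
      push_neg at hmin
      have hmlt : m - 1 < k := by omega
      refine ⟨⟨m - 1, hmlt⟩, e, ⟨hmin, ?_⟩, het.symm⟩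
      simp only [hS, Set.mem_setOf_eq, not_le]
      have : (m - 1) + 1 = m := by omega
      rw [this]
      exact hmspec
  · -- the estimate
    intro j
    have htsum : (∑' t : T j, δ ^ ((t : ℕ) - 1)) = ∑' e : E j, δ ^ (e : ℕ) := by
      rw [hT]
      have hinj : Set.InjOn (· + 1) (E j) := fun a _ b _ h => by simpa using h
      rw [tsum_image (fun t : ℕ => δ ^ (t - 1)) hinj]
      apply tsum_congr
      intro e
      simp
    rw [htsum, hmass j]
    have hj1 : (j : ℕ) + 1 ≤ k := j.isLt
    obtain ⟨h0j, h1j⟩ := hs01 (j : ℕ) (le_of_lt j.isLt)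
    obtain ⟨h0j', h1j'⟩ := hs01 ((j : ℕ) + 1) hj1
    obtain ⟨hA1, hA2⟩ := G_bound hδpos hδ1 (by linarith : (0:ℝ) ≤ 1 - s (j : ℕ))
      (by linarith : 1 - s (j : ℕ) ≤ 1)
    obtain ⟨hB1, hB2⟩ := G_bound hδpos hδ1 (by linarith : (0:ℝ) ≤ 1 - s ((j : ℕ) + 1))
      (by linarith : 1 - s ((j : ℕ) + 1) ≤ 1)
    have hαj : α j = s ((j : ℕ) + 1) - s (j : ℕ) := by
      rw [hsucc]
      have : α' (j : ℕ) = α j := by simp [hα', j.isLt]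
      linarith [this]
    rw [hαj, abs_lt, mul_sub]
    constructor <;> nlinarith
end
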